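/- Let r ≥ 2. The matroid M_r has r pairwise disjoint bases, namely the sets B_j = {v_1^j, v_2^j, …, v_{r−1}^j, w_j} for j = 1, …, r. -/
import Mathlib


/-- Independence in the matroid `M_r` (ground set `Fin r × Fin r`; `(i,j)` is `v_{i+1}^{j+1}`
for `i < r-1` and `w_{j+1}` for `i = r-1`). -/
def MrIndep (r : ℕ) (A : Finset (Fin r × Fin r)) : Prop :=
  A.card ≤ r ∧ ∀ i : Fin r, (i : ℕ) < r - 1 → (A.filter (fun p => p.1 = i)).card ≤ 1

/-- The `j`-th basis `B_j = {v_1^j, …, v_{r-1}^j, w_j}`, i.e. the `j`-th column. -/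
def MrB (r : ℕ) (j : Fin r) : Finset (Fin r × Fin r) :=
  Finset.univ.image (fun i : Fin r => (i, j))

lemma mem_MrB (r : ℕ) (j : Fin r) (p : Fin r × Fin r) : p ∈ MrB r j ↔ p.2 = j := by
  simp [MrB]
  constructor
  · rintro ⟨i, hi⟩; exact (congrArg Prod.snd hi).symm ▸ rfl
  · intro h; exact ⟨p.1, by rw [← h]⟩

lemma MrB_card (r : ℕ) (j : Fin r) : (MrB r j).card = r := by
  rw [MrB, Finset.card_image_of_injective _ (fun a b h => (Prod.mk.injEq _ _ _ _).mp h |>.1)]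
  simp

/-- `M_r` has `r` pairwise disjoint bases `B_j = {v_1^j, …, v_{r-1}^j, w_j}`:
each `B_j` is independent of size `r`, is a maximal independent set, and the `B_j`
are pairwise disjoint. -/
theorem stmt1 (r : ℕ) (hr : 2 ≤ r) :
    (∀ j : Fin r, MrIndep r (MrB r j) ∧ (MrB r j).card = r ∧
      (∀ A : Finset (Fin r × Fin r), MrIndep r A → MrB r j ⊆ A → A = MrB r j)) ∧
    (∀ j j' : Fin r, j ≠ j' → Disjoint (MrB r j) (MrB r j')) := by
  refine ⟨fun j => ⟨⟨le_of_eq (MrB_card r j), ?_⟩, MrB_card r j, fun A hA hsub => ?_⟩,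
    fun j j' hjj' => ?_⟩
  · intro i _
    have : (MrB r j).filter (fun p => p.1 = i) ⊆ {(i, j)} := by
      intro p hp
      simp only [Finset.mem_filter, mem_MrB] at hp
      simp [Prod.ext_iff, hp.1, hp.2]
    simpa using Finset.card_le_card this
  · exact (Finset.eq_of_subset_of_card_le hsub (by rw [MrB_card]; exact hA.1)).symm
  · rw [Finset.disjoint_left]
    intro p hp hp'
    rw [mem_MrB] at hp hp'
    exact hjj' (hp ▸ hp')
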